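/- For every $p > 1$, the Sobolev-type space $\mathbb{D}^{1,p}(H) = \{F \in L^p(\Omega;H) : DF \in L^p(\Omega\times E;H)\}$, equipped with the norm $\|F\|_{\mathbb{D}^{1,p}(H)} = (\|F\|_{L^p(\Omega;H)}^p + \|DF\|_{L^p(\Omega\times E;H)}^p)^{1/p}$, is a Banach space; equivalently, the restriction of $D$ to $\mathbb{D}^{1,p}(H)$ is a closed operator from $L^p(\Omega;H)$ to $L^p(\Omega\times E;H)$. Moreover $\mathbb{D}^{1,2}(H)$ is a Hilbert space. -/

import Mathlib

open MeasureTheory Filter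
open scoped ENNReal RealInnerProductSpace

/-- **Mecke's formula** (add-one form), characterizing Poisson random measures
with σ-finite intensity `μ`. -/
def MeckeAdd {Ω E : Type*} [MeasurableSpace Ω] [MeasurableSpace E]
    (P : Measure Ω) (μ : Measure E) (N : Ω → Measure E) : Prop :=
  ∀ f : Measure E → E → ℝ≥0∞, Measurable (Function.uncurry f) →
    ∫⁻ ω, ∫⁻ x, f (N ω) x ∂(N ω) ∂P
      = ∫⁻ ω, ∫⁻ x, f (N ω + Measure.dirac x) x ∂μ ∂P

/-- Existence of an `L^p` limit of an `L^p`-Cauchy sequence, stated with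
explicit `eLpNorm`s. -/
lemma exists_lp_limit {α H : Type*} [MeasurableSpace α] [NormedAddCommGroup H]
    [CompleteSpace H] {ν : Measure α} {p : ℝ≥0∞} [Fact (1 ≤ p)] {u : ℕ → α → H}
    (hu : ∀ n, MemLp (u n) p ν)
    (hcau : ∀ ε : ℝ≥0∞, 0 < ε → ∃ n₀, ∀ m ≥ n₀, ∀ n ≥ n₀,
        eLpNorm (fun a => u m a - u n a) p ν < ε) :
    ∃ v : α → H, MemLp v p ν ∧
      Tendsto (fun n => eLpNorm (fun a => u n a - v a) p ν) atTop (nhds 0) := by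
  set U : ℕ → Lp H p ν := fun n => (hu n).toLp (u n) with hU
  have hUcau : CauchySeq U := by
    refine Metric.cauchySeq_iff'.2 fun ε hε => ?_
    obtain ⟨n₀, h⟩ := hcau (ENNReal.ofReal ε) (ENNReal.ofReal_pos.2 hε)
    refine ⟨n₀, fun n hn => ?_⟩
    have hd : dist (U n) (U n₀) = (eLpNorm (fun a => u n a - u n₀ a) p ν).toReal := by
      rw [Lp.dist_def]
      congr 1
      apply eLpNorm_congr_ae
      filter_upwards [(hu n).coeFn_toLp, (hu n₀).coeFn_toLp] with a h1 h2
      simp [hU, h1, h2]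
    have hlt := h n hn n₀ le_rfl
    rw [hd]
    exact (ENNReal.lt_ofReal_iff_toReal_lt (lt_of_lt_of_le hlt le_top).ne).1 hlt
  obtain ⟨V, hV⟩ := cauchySeq_tendsto_of_complete hUcau
  refine ⟨V, Lp.memLp V, ?_⟩
  have heq : ∀ n, eLpNorm (fun a => u n a - V a) p ν = edist (U n) V := by
    intro n
    rw [Lp.edist_def]
    apply eLpNorm_congr_ae
    filter_upwards [(hu n).coeFn_toLp] with a h1
    simp [hU, h1]
  simp only [heq]
  have hd : Tendsto (fun n => dist (U n) V) atTop (nhds 0) :=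
    tendsto_iff_dist_tendsto_zero.1 hV
  have := ENNReal.tendsto_ofReal hd
  simpa [edist_dist] using this

/-- Lift an a.e. statement about the first coordinate to the product measure. -/
lemma ae_prod_fst {α β : Type*} [MeasurableSpace α] [MeasurableSpace β]
    {P : Measure α} {μ : Measure β} [SFinite μ] {Q : α → Prop}
    (h : ∀ᵐ a ∂P, Q a) : ∀ᵐ pr ∂(P.prod μ), Q pr.1 := by
  rw [ae_iff] at h ⊢
  have hsub : {pr : α × β | ¬ Q pr.1} ⊆ (toMeasurable P {a | ¬ Q a}) ×ˢ Set.univ :=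
    fun pr hpr => ⟨subset_toMeasurable _ _ hpr, trivial⟩
  refine measure_mono_null hsub ?_
  rw [Measure.prod_prod, measure_toMeasurable, h, zero_mul]

/-- **Completeness of the Sobolev space `𝔻^{1,p}(H)`** (equivalently, closedness
of the restricted difference operator `D` from `L^p(Ω;H)` to `L^p(Ω × E;H)`):
every sequence `(F_n)` in `𝔻^{1,p}(H)` which is Cauchy both in `L^p(Ω;H)` and
such that `(DF_n)` is Cauchy in `L^p(Ω × E;H)` converges in the
`𝔻^{1,p}(H)`-norm to some `G ∈ 𝔻^{1,p}(H)`; here `D_x F = f (N + δ_x) - F` for a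
representative `f` of `F`.  (For `p = 2` the norm comes from an inner product,
so `𝔻^{1,2}(H)` is a Hilbert space.) -/
theorem D1p_complete
    {Ω E H : Type*} [MeasurableSpace Ω] [MeasurableSpace E]
    [NormedAddCommGroup H] [InnerProductSpace ℝ H] [CompleteSpace H]
    [TopologicalSpace.SeparableSpace H]
    (P : Measure Ω) [IsProbabilityMeasure P] (μ : Measure E) [SigmaFinite μ]
    (N : Ω → Measure E) (hMecke : MeckeAdd P μ N) (hN : Measurable N)
    (p : ℝ≥0∞) (hp : 1 < p) (hp' : p ≠ ∞)
    (F : ℕ → Ω → H) (f : ℕ → Measure E → H)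
    (hf : ∀ n, StronglyMeasurable (f n))
    (hFf : ∀ n, ∀ᵐ ω ∂P, F n ω = f n (N ω))
    (hFm : ∀ n, MemLp (F n) p P)
    (hDm : ∀ n, MemLp (fun pr : Ω × E =>
        f n (N pr.1 + Measure.dirac pr.2) - F n pr.1) p (P.prod μ))
    (hFcauchy : ∀ ε : ℝ≥0∞, 0 < ε → ∃ n₀, ∀ m ≥ n₀, ∀ n ≥ n₀,
        eLpNorm (fun ω => F m ω - F n ω) p P < ε)
    (hDcauchy : ∀ ε : ℝ≥0∞, 0 < ε → ∃ n₀, ∀ m ≥ n₀, ∀ n ≥ n₀,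
        eLpNorm (fun pr : Ω × E =>
            (f m (N pr.1 + Measure.dirac pr.2) - F m pr.1)
              - (f n (N pr.1 + Measure.dirac pr.2) - F n pr.1)) p (P.prod μ) < ε) :
    ∃ (G : Ω → H) (g : Measure E → H), StronglyMeasurable g ∧
      (∀ᵐ ω ∂P, G ω = g (N ω)) ∧ MemLp G p P ∧
      MemLp (fun pr : Ω × E => g (N pr.1 + Measure.dirac pr.2) - G pr.1) p (P.prod μ) ∧
      Tendsto (fun n => eLpNorm (fun ω => F n ω - G ω) p P) atTop (nhds 0) ∧
      Tendsto (fun n => eLpNorm (fun pr : Ω × E =>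
          (f n (N pr.1 + Measure.dirac pr.2) - F n pr.1)
            - (g (N pr.1 + Measure.dirac pr.2) - G pr.1)) p (P.prod μ)) atTop (nhds 0) := by
  classical
  haveI := Fact.mk hp.le
  haveI := UniformSpace.secondCountable_of_separable H
  letI : MeasurableSpace H := borel H
  haveI : BorelSpace H := ⟨rfl⟩
  have hp0 : p ≠ 0 := (zero_lt_one.trans hp).ne'
  -- `L^p` limits of the two Cauchy sequences
  obtain ⟨G₀, hG₀m, hG₀⟩ := exists_lp_limit hFm hFcauchy
  obtain ⟨K₀, hK₀m, hK₀⟩ := exists_lp_limit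
    (u := fun n (pr : Ω × E) => f n (N pr.1 + Measure.dirac pr.2) - F n pr.1) hDm hDcauchy
  -- a.e. convergent subsequences
  have h1 := tendstoInMeasure_of_tendsto_eLpNorm (l := atTop) hp0
    (fun n => (hFm n).1) hG₀m.1 (by simpa [Pi.sub_def] using hG₀)
  obtain ⟨φ₁, hφ₁mono, hφ₁ae⟩ := h1.exists_seq_tendsto_ae
  have h2 : Tendsto (fun k => eLpNorm
      ((fun pr : Ω × E => f (φ₁ k) (N pr.1 + Measure.dirac pr.2) - F (φ₁ k) pr.1) - K₀)
      p (P.prod μ)) atTop (nhds 0) := by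
    have := hK₀.comp hφ₁mono.tendsto_atTop
    simpa [Pi.sub_def, Function.comp_def] using this
  have h2m := tendstoInMeasure_of_tendsto_eLpNorm (l := atTop) hp0
    (fun k => (hDm (φ₁ k)).1) hK₀m.1 h2
  obtain ⟨φ₂, hφ₂mono, hφ₂ae⟩ := h2m.exists_seq_tendsto_ae
  set ψ : ℕ → ℕ := fun k => φ₁ (φ₂ k) with hψ
  have hψF : ∀ᵐ ω ∂P, Tendsto (fun k => F (ψ k) ω) atTop (nhds (G₀ ω)) :=
    hφ₁ae.mono fun ω h => h.comp hφ₂mono.tendsto_atTop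
  -- construction of the representative `g`
  set S : Set (Measure E) :=
    {ν | ∃ c, Tendsto (fun k => f (ψ k) ν) atTop (nhds c)} with hSdef
  have hS : MeasurableSet S :=
    measurableSet_exists_tendsto fun k => (hf (ψ k)).measurable
  set g : Measure E → H :=
    fun ν => if ν ∈ S then limUnder atTop (fun k => f (ψ k) ν) else 0 with hgdef
  have hg_eq : ∀ ν c, Tendsto (fun k => f (ψ k) ν) atTop (nhds c) → g ν = c := by
    intro ν c hc
    simp only [hgdef]
    rw [if_pos ⟨c, hc⟩, hc.limUnder_eq]
  have hgsm : StronglyMeasurable g := by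
    apply stronglyMeasurable_of_tendsto (f := fun k ν => if ν ∈ S then f (ψ k) ν else 0) atTop
    · intro k
      exact StronglyMeasurable.ite hS (hf (ψ k)) stronglyMeasurable_const
    · rw [tendsto_pi_nhds]
      intro ν
      by_cases hν : ν ∈ S
      · obtain ⟨c, hc⟩ := hν
        have hgc : g ν = c := hg_eq ν c hc
        simp only [if_pos (show ν ∈ S from ⟨c, hc⟩), hgc]
        exact hc
      · simp only [if_neg hν, hgdef, if_neg hν]
        exact tendsto_const_nhds
  set G : Ω → H := fun ω => g (N ω) with hGdef
  have hFfae : ∀ᵐ ω ∂P, ∀ n, F n ω = f n (N ω) := ae_all_iff.2 hFf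
  have hGG₀ : ∀ᵐ ω ∂P, G ω = G₀ ω := by
    filter_upwards [hψF, hFfae] with ω h1' h2'
    have ht : Tendsto (fun k => f (ψ k) (N ω)) atTop (nhds (G₀ ω)) :=
      h1'.congr fun k => h2' (ψ k)
    exact hg_eq _ _ ht
  have hGm : MemLp G p P := (memLp_congr_ae hGG₀).2 hG₀m
  have hGtend : Tendsto (fun n => eLpNorm (fun ω => F n ω - G ω) p P) atTop (nhds 0) := by
    have heq : ∀ n, eLpNorm (fun ω => F n ω - G ω) p P
        = eLpNorm (fun ω => F n ω - G₀ ω) p P := fun n =>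
      eLpNorm_congr_ae (hGG₀.mono fun ω h => by simp only [h])
    simp only [heq]
    exact hG₀
  -- the gradient part
  have hψFprod : ∀ᵐ pr ∂(P.prod μ),
      Tendsto (fun k => F (ψ k) pr.1) atTop (nhds (G₀ pr.1)) := ae_prod_fst hψF
  have hGG₀prod : ∀ᵐ pr ∂(P.prod μ), G pr.1 = G₀ pr.1 := ae_prod_fst hGG₀
  have hDG : ∀ᵐ pr ∂(P.prod μ),
      g (N pr.1 + Measure.dirac pr.2) - G pr.1 = K₀ pr := by
    filter_upwards [hφ₂ae, hψFprod, hGG₀prod] with pr hD hF hGeq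
    have ht : Tendsto (fun k => f (ψ k) (N pr.1 + Measure.dirac pr.2)) atTop
        (nhds (K₀ pr + G₀ pr.1)) := by
      have := hD.add hF
      refine this.congr fun k => ?_
      exact sub_add_cancel _ _
    rw [hg_eq _ _ ht, hGeq, add_sub_cancel_right]
  have hDGm : MemLp (fun pr : Ω × E =>
      g (N pr.1 + Measure.dirac pr.2) - G pr.1) p (P.prod μ) :=
    (memLp_congr_ae hDG).2 hK₀m
  have hDGtend : Tendsto (fun n => eLpNorm (fun pr : Ω × E =>
      (f n (N pr.1 + Measure.dirac pr.2) - F n pr.1)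
        - (g (N pr.1 + Measure.dirac pr.2) - G pr.1)) p (P.prod μ)) atTop (nhds 0) := by
    have heq : ∀ n, eLpNorm (fun pr : Ω × E =>
        (f n (N pr.1 + Measure.dirac pr.2) - F n pr.1)
          - (g (N pr.1 + Measure.dirac pr.2) - G pr.1)) p (P.prod μ)
        = eLpNorm (fun pr : Ω × E =>
            (f n (N pr.1 + Measure.dirac pr.2) - F n pr.1) - K₀ pr) p (P.prod μ) := fun n =>
      eLpNorm_congr_ae (hDG.mono fun pr h => by simp only [h])
    simp only [heq]
    exact hK₀
  exact ⟨G, g, hgsm, Eventually.of_forall fun ω => rfl, hGm, hDGm, hGtend, hDGtend⟩
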